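/- Let μ > 0 and let u : ℝ → ℝ be twice differentiable with u''(t) = −u(t)·(u(t)² − μ) for all t. Suppose the initial energy is negative: ½·u'(0)² + ¼·u(0)⁴ − (μ/2)·u(0)² < 0. Then u(t) ≠ 0 for all t ∈ ℝ, and the sign of u is constant: if u(0) > 0 then u(t) > 0 for all t, and if u(0) < 0 then u(t) < 0 for all t. In particular, negative initial energy forces the oscillation to remain confined to one side (type i oscillation). -/
import Mathlib


/-- Negative initial energy forces sign confinement (type i oscillation): if
`u'' = −u(u² − μ)` with `μ > 0` and the initial energy
`½·u'(0)² + ¼·u(0)⁴ − (μ/2)·u(0)²` is negative, then `u` never vanishes and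
keeps the sign of `u(0)`. -/
theorem stmt_7 (μ : ℝ) (hμ : 0 < μ) (u : ℝ → ℝ)
    (hu : Differentiable ℝ u) (hu' : Differentiable ℝ (deriv u))
    (hode : ∀ t : ℝ, deriv (deriv u) t = -u t * (u t ^ 2 - μ))
    (hE : (1 / 2) * (deriv u 0) ^ 2 + (1 / 4) * (u 0) ^ 4 - (μ / 2) * (u 0) ^ 2 < 0) :
    (∀ t : ℝ, u t ≠ 0) ∧
    (0 < u 0 → ∀ t : ℝ, 0 < u t) ∧
    (u 0 < 0 → ∀ t : ℝ, u t < 0) := by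
  set E : ℝ → ℝ := fun t => (1 / 2) * (deriv u t) ^ 2 + (1 / 4) * (u t) ^ 4
      - (μ / 2) * (u t) ^ 2 with hEdef
  have hEd : ∀ t : ℝ, HasDerivAt E 0 t := by
    intro t
    have h1 : HasDerivAt (deriv u) (deriv (deriv u) t) t := (hu' t).hasDerivAt
    have h2 : HasDerivAt u (deriv u t) t := (hu t).hasDerivAt
    have h : HasDerivAt E
        ((1 / 2) * (2 * deriv u t ^ 1 * deriv (deriv u) t)
          + (1 / 4) * (4 * u t ^ 3 * deriv u t)
          - (μ / 2) * (2 * u t ^ 1 * deriv u t)) t := by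
      exact (((h1.pow 2).const_mul (1/2:ℝ)).add ((h2.pow 4).const_mul (1/4:ℝ))).sub
        ((h2.pow 2).const_mul (μ/2:ℝ))
    convert h using 1
    rw [hode t]; ring
  have hEdiff : Differentiable ℝ E := fun t => (hEd t).differentiableAt
  have hEconst : ∀ t : ℝ, E t = E 0 := by
    intro t
    exact is_const_of_deriv_eq_zero hEdiff (fun x => (hEd x).deriv) t 0
  have hEneg : ∀ t : ℝ, E t < 0 := fun t => (hEconst t).trans_lt hE
  have hne : ∀ t : ℝ, u t ≠ 0 := by
    intro t h0
    have := hEneg t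
    rw [hEdef] at this
    simp only [h0] at this
    nlinarith [sq_nonneg (deriv u t)]
  refine ⟨hne, ?_, ?_⟩
  · intro h0 t
    by_contra h
    push_neg at h
    have ht : u t < 0 := lt_of_le_of_ne h (hne t)
    have : (0 : ℝ) ∈ Set.uIcc (u 0) (u t) := Set.mem_uIcc.2 (Or.inr ⟨ht.le, h0.le⟩)
    obtain ⟨c, _, hc⟩ := intermediate_value_uIcc (hu.continuous.continuousOn (s := Set.uIcc 0 t)) this
    exact hne c hc
  · intro h0 t
    by_contra h
    push_neg at h
    have ht : 0 < u t := lt_of_le_of_ne h (Ne.symm (hne t))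
    have : (0 : ℝ) ∈ Set.uIcc (u 0) (u t) := Set.mem_uIcc.2 (Or.inl ⟨h0.le, ht.le⟩)
    obtain ⟨c, _, hc⟩ := intermediate_value_uIcc (hu.continuous.continuousOn (s := Set.uIcc 0 t)) this
    exact hne c hc
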